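/- Let ε_1,…,ε_N be random variables such that AOA(N) holds: for every (h_1,…,h_N) ∈ ℝ^N, Σ_{i=1}^N h_i(ε_i − b_i) ≥ 0 a.s. implies h = 0. Then there exists α_N ∈ (0,1) such that for every (h_1,…,h_N) ∈ ℝ^N with Σ_{i=1}^N h_i² = 1, one has P(Σ_{i=1}^N h_i(ε_i − b_i) < −α_N) > α_N. -/

import Mathlib

open MeasureTheory ProbabilityTheory Filter Finset

/-- If AOA(N) holds (a.s. nonnegative portfolio values force zero
weights), then there is a quantitative no-arbitrage constant `α_N ∈ (0,1)`:
for every unit-norm `(h 1, …, h N)` one has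
`P(Σ h i (ε i − b i) < −α_N) > α_N`. -/
theorem apt_quantitative_AOA_finite
    {Ω : Type*} [MeasurableSpace Ω] (P : Measure Ω) [IsProbabilityMeasure P]
    (ε : ℕ → Ω → ℝ) (b : ℕ → ℝ)
    (hmeas : ∀ i, Measurable (ε i))
    (N : ℕ) (hN : 1 ≤ N)
    (hAOA : ∀ h : ℕ → ℝ,
      (∀ᵐ ω ∂P, 0 ≤ ∑ i ∈ Finset.range N, h i * (ε i ω - b i)) →
      ∀ i < N, h i = 0) :
    ∃ α : ℝ, α ∈ Set.Ioo (0 : ℝ) 1 ∧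
      ∀ h : ℕ → ℝ, ∑ i ∈ Finset.range N, (h i) ^ 2 = 1 →
        ENNReal.ofReal α
          < P {ω | ∑ i ∈ Finset.range N, h i * (ε i ω - b i) < -α} := by
  classical
  set X : EuclideanSpace ℝ (Fin N) → Ω → ℝ :=
    fun x ω => ∑ i : Fin N, x i * (ε i ω - b i) with hXdef
  set g : EuclideanSpace ℝ (Fin N) → Ω → ℝ :=
    fun x ω => min 1 (max 0 (-X x ω)) with hgdef
  have hXmeas : ∀ x, Measurable (X x) := by
    intro x
    apply Finset.measurable_sum
    intro i _
    exact ((hmeas i).sub measurable_const).const_mul (x i)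
  have hgmeas : ∀ x, Measurable (g x) := fun x =>
    measurable_const.min (measurable_const.max (hXmeas x).neg)
  have hgnonneg : ∀ x ω, 0 ≤ g x ω := fun x ω =>
    le_min zero_le_one (le_max_left _ _)
  have hgle1 : ∀ x ω, g x ω ≤ 1 := fun x ω => min_le_left _ _
  have hgbound : ∀ x ω, ‖g x ω‖ ≤ (1:ℝ) := by
    intro x ω
    rw [Real.norm_eq_abs, abs_of_nonneg (hgnonneg x ω)]
    exact hgle1 x ω
  have hgint : ∀ x, Integrable (g x) P := fun x =>
    (integrable_const (1:ℝ)).mono' (hgmeas x).aestronglyMeasurable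
      (ae_of_all _ fun ω => hgbound x ω)
  have hφcont : Continuous fun x => ∫ ω, g x ω ∂P := by
    apply continuous_of_dominated
    · exact fun x => (hgmeas x).aestronglyMeasurable
    · exact fun x => ae_of_all _ fun ω => hgbound x ω
    · exact integrable_const 1
    · refine ae_of_all _ fun ω => ?_
      have hXc : Continuous fun x : EuclideanSpace ℝ (Fin N) => X x ω := by
        apply continuous_finset_sum
        intro i _
        exact ((EuclideanSpace.proj (𝕜 := ℝ) i).continuous).mul continuous_const
      exact continuous_const.min (continuous_const.max hXc.neg)
  have hScomp : IsCompact (Metric.sphere (0 : EuclideanSpace ℝ (Fin N)) 1) :=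
    isCompact_sphere 0 1
  have hSne : (Metric.sphere (0 : EuclideanSpace ℝ (Fin N)) 1).Nonempty := by
    refine ⟨EuclideanSpace.single ⟨0, hN⟩ (1:ℝ), ?_⟩
    simp [EuclideanSpace.norm_single]
  obtain ⟨x₀, hx₀S, hx₀min⟩ :=
    hScomp.exists_isMinOn hSne hφcont.continuousOn
  set m : ℝ := ∫ ω, g x₀ ω ∂P with hmdef
  -- m > 0
  have hm_nonneg : 0 ≤ m := integral_nonneg (fun ω => hgnonneg x₀ ω)
  have hm_pos : 0 < m := by
    rcases hm_nonneg.lt_or_eq with h | h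
    · exact h
    · exfalso
      have hzero : g x₀ =ᵐ[P] 0 := by
        have := (integral_eq_zero_iff_of_nonneg (fun ω => hgnonneg x₀ ω)
          (hgint x₀)).mp h.symm
        exact this
      have hXnn : ∀ᵐ ω ∂P, 0 ≤ X x₀ ω := by
        filter_upwards [hzero] with ω hω
        by_contra hlt
        push_neg at hlt
        have h1 : 0 < max 0 (-X x₀ ω) := lt_max_of_lt_right (by linarith)
        have h2 : 0 < g x₀ ω := lt_min one_pos h1
        simp [hω] at h2
      set h' : ℕ → ℝ := fun i => if hi : i < N then x₀ ⟨i, hi⟩ else 0 with hh'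
      have hsum : ∀ ω, ∑ i ∈ Finset.range N, h' i * (ε i ω - b i) = X x₀ ω := by
        intro ω
        rw [← Fin.sum_univ_eq_sum_range (fun i => h' i * (ε i ω - b i))]
        apply Finset.sum_congr rfl
        intro i _
        simp [hh', i.isLt]
      have hzero' : ∀ i < N, h' i = 0 := by
        apply hAOA
        filter_upwards [hXnn] with ω hω
        rw [hsum ω]; exact hω
      have hx₀0 : x₀ = 0 := by
        ext i
        have := hzero' i i.isLt
        simpa [hh', i.isLt] using this
      rw [hx₀0] at hx₀S
      simp at hx₀S
  have hm_le_one : m ≤ 1 := by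
    calc m ≤ ∫ _ω, (1:ℝ) ∂P :=
          integral_mono (hgint x₀) (integrable_const 1) (fun ω => hgle1 x₀ ω)
      _ = 1 := by simp
  refine ⟨m / 3, ⟨by positivity, by linarith⟩, ?_⟩
  intro h hh
  set α : ℝ := m / 3 with hα
  have hαpos : 0 < α := by positivity
  -- the Euclidean vector corresponding to h
  set x : EuclideanSpace ℝ (Fin N) := WithLp.toLp 2 (fun i : Fin N => h i) with hxdef
  have hxS : x ∈ Metric.sphere (0 : EuclideanSpace ℝ (Fin N)) 1 := by
    have hnorm : ‖x‖ = Real.sqrt (∑ i : Fin N, (h i) ^ 2) := by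
      rw [EuclideanSpace.norm_eq]
      congr 1
      apply Finset.sum_congr rfl
      intro i _
      rw [Real.norm_eq_abs, sq_abs]
    have hsum : ∑ i : Fin N, (h i) ^ 2 = 1 := by
      rw [Fin.sum_univ_eq_sum_range (fun i => (h i) ^ 2)]
      exact hh
    simp [mem_sphere_iff_norm, hnorm, hsum]
  have hmle : m ≤ ∫ ω, g x ω ∂P := hx₀min hxS
  set s : Set Ω := {ω | X x ω < -α} with hsdef
  have hsmeas : MeasurableSet s := measurableSet_lt (hXmeas x) measurable_const
  -- pointwise bound : g x ω ≤ indicator s 1 ω + α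
  have hptwise : ∀ ω, g x ω ≤ s.indicator (fun _ => (1:ℝ)) ω + α := by
    intro ω
    by_cases hω : ω ∈ s
    · rw [Set.indicator_of_mem hω]
      have := hgle1 x ω
      linarith
    · rw [Set.indicator_of_notMem hω]
      have hX : -α ≤ X x ω := not_lt.mp hω
      have : max 0 (-X x ω) ≤ α := max_le hαpos.le (by linarith)
      calc g x ω ≤ max 0 (-X x ω) := min_le_right _ _
        _ ≤ α := this
        _ = 0 + α := by ring
  have hind_int : Integrable (s.indicator fun _ => (1:ℝ)) P :=
    (integrable_const (1:ℝ)).indicator hsmeas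
  have hint_le : ∫ ω, g x ω ∂P ≤ (P s).toReal + α := by
    calc ∫ ω, g x ω ∂P
        ≤ ∫ ω, (s.indicator (fun _ => (1:ℝ)) ω + α) ∂P :=
          integral_mono (hgint x) (hind_int.add (integrable_const α)) hptwise
      _ = (P s).toReal + α := by
          rw [integral_add hind_int (integrable_const α),
            integral_indicator_const (1:ℝ) hsmeas]
          simp [Measure.real]
  have hPs : 2 * α ≤ (P s).toReal := by
    have : m ≤ (P s).toReal + α := le_trans hmle hint_le
    have : m - α ≤ (P s).toReal := by linarith
    calc 2 * α = m - α := by rw [hα]; ring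
      _ ≤ (P s).toReal := this
  have hset_eq : {ω | ∑ i ∈ Finset.range N, h i * (ε i ω - b i) < -α} = s := by
    ext ω
    simp only [hsdef, Set.mem_setOf_eq, hXdef]
    rw [← Fin.sum_univ_eq_sum_range (fun i => h i * (ε i ω - b i))]
  rw [hset_eq]
  have hfin : P s ≠ ⊤ := measure_ne_top P s
  calc ENNReal.ofReal α < ENNReal.ofReal ((P s).toReal) := by
        apply (ENNReal.ofReal_lt_ofReal_iff (by linarith)).mpr
        linarith
    _ = P s := ENNReal.ofReal_toReal hfin
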